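/- For every integer d ≥ 1, every 2-TC-spanner of the Boolean hypercube [2]^d has at least (1/(4d))·max_{0≤i<j≤d} min_{i≤k≤j} [C(d,i)·C(d−i,d−j)] / min{C(k,i), C(d−k,d−j)} edges, where C(a,b) denotes the binomial coefficient. -/

import Mathlib

/-- There is a directed walk of length at most `k` from `u` to `v` in the digraph
with edge relation `E`. -/
def distLE {V : Type*} (E : V → V → Prop) : ℕ → V → V → Prop
  | 0 => fun u v => u = v
  | n + 1 => fun u v => u = v ∨ ∃ w, E u w ∧ distLE E n w v

/-- `H` is a `k`-transitive-closure-spanner of the digraph `E`: every edge of `H` is an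
edge of the transitive closure of `E`, and whenever `E` has a directed path from `u` to `v`,
`H` has one of length at most `k`. -/
def IsTCSpanner {V : Type*} (E H : V → V → Prop) (k : ℕ) : Prop :=
  (∀ u v, H u v → u ≠ v ∧ Relation.TransGen E u v) ∧
  (∀ u v, Relation.ReflTransGen E u v → distLE H k u v)

/-- The Boolean hypercube digraph `[2]^d`: an edge from `x` to `y` iff `y` is obtained from
`x` by flipping a single coordinate from `false` to `true`. -/
def cubeEdge (d : ℕ) (x y : Fin d → Bool) : Prop :=
  ∃ t, x t = false ∧ y = Function.update x t true


open Finset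


namespace Cube

variable {d : ℕ}

def supp (x : Fin d → Bool) : Finset (Fin d) := Finset.univ.filter (fun t => x t = true)

def wt (x : Fin d → Bool) : ℕ := (supp x).card

def vle (x y : Fin d → Bool) : Prop := ∀ t, x t = true → y t = true

instance (x y : Fin d → Bool) : Decidable (vle x y) := by
  unfold vle; infer_instance

lemma mem_supp {x : Fin d → Bool} {t : Fin d} : t ∈ supp x ↔ x t = true := by
  simp [supp]

lemma supp_subset {x y : Fin d → Bool} (h : vle x y) : supp x ⊆ supp y := by
  intro t ht; exact mem_supp.2 (h t (mem_supp.1 ht))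

lemma eq_of_supp_eq {x y : Fin d → Bool} (h : supp x = supp y) : x = y := by
  funext t
  have h1 : x t = true ↔ y t = true := by rw [← mem_supp, ← mem_supp, h]
  cases hx : x t <;> cases hy : y t <;> simp_all

lemma vle_refl (x : Fin d → Bool) : vle x x := fun _ h => h

lemma vle_trans {x y z : Fin d → Bool} (h1 : vle x y) (h2 : vle y z) : vle x z :=
  fun t ht => h2 t (h1 t ht)

lemma cubeEdge_vle {x y : Fin d → Bool} (h : cubeEdge d x y) : vle x y := by
  obtain ⟨t, hxt, rfl⟩ := h
  intro s hs
  rcases eq_or_ne s t with rfl | hst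
  · simp [Function.update_self]
  · simpa [Function.update_of_ne hst] using hs

lemma rtg_vle {x y : Fin d → Bool} (h : Relation.ReflTransGen (cubeEdge d) x y) : vle x y := by
  induction h with
  | refl => exact vle_refl x
  | tail _ h2 ih => exact vle_trans ih (cubeEdge_vle h2)

lemma wt_mono {x y : Fin d → Bool} (h : vle x y) : wt x ≤ wt y :=
  card_le_card (supp_subset h)

lemma vle_rtg_aux : ∀ n (x y : Fin d → Bool), (supp y \ supp x).card ≤ n → vle x y →
    Relation.ReflTransGen (cubeEdge d) x y := by
  intro n
  induction n with
  | zero =>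
    intro x y hc h
    have hsub := supp_subset h
    have hemp : supp y \ supp x = ∅ := card_eq_zero.1 (Nat.le_zero.1 hc)
    have hsub' : supp y ⊆ supp x := by
      intro t ht
      by_contra hnt
      exact absurd (mem_sdiff.2 ⟨ht, hnt⟩) (by simp [hemp])
    have : x = y := eq_of_supp_eq (subset_antisymm hsub hsub')
    subst this; exact Relation.ReflTransGen.refl
  | succ n ih =>
    intro x y hc h
    by_cases hxy : x = y
    · subst hxy; exact Relation.ReflTransGen.refl
    · have hne : supp x ≠ supp y := fun he => hxy (eq_of_supp_eq he)
      obtain ⟨t, ht⟩ : (supp y \ supp x).Nonempty := by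
        rw [sdiff_nonempty]
        intro hsub'
        exact hne (subset_antisymm (supp_subset h) hsub')
      have htY : t ∈ supp y := (mem_sdiff.1 ht).1
      have htX : t ∉ supp x := (mem_sdiff.1 ht).2
      set x' := Function.update x t true with hx'
      have hedge : cubeEdge d x x' := by
        refine ⟨t, ?_, rfl⟩
        have := mem_supp.not.1 htX
        simpa using this
      have h' : vle x' y := by
        intro s hs
        rcases eq_or_ne s t with rfl | hst
        · exact mem_supp.1 htY
        · exact h s (by simpa [hx', Function.update_of_ne hst] using hs)
      have hsupp : supp x' = insert t (supp x) := by
        ext s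
        rcases eq_or_ne s t with rfl | hst
        · simp [mem_supp, hx', Function.update_self]
        · simp [mem_supp, hx', Function.update_of_ne hst, hst]
      have hcard : (supp y \ supp x').card ≤ n := by
        rw [hsupp, sdiff_insert]
        have := card_erase_of_mem ht
        omega
      exact Relation.ReflTransGen.head hedge (ih x' y hcard h')

lemma vle_rtg {x y : Fin d → Bool} (h : vle x y) : Relation.ReflTransGen (cubeEdge d) x y :=
  vle_rtg_aux _ x y le_rfl h


def ind (A : Finset (Fin d)) : Fin d → Bool := fun t => decide (t ∈ A)

lemma supp_ind (A : Finset (Fin d)) : supp (ind A) = A := by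
  ext t; simp [supp, ind]

lemma card_wt_eq (i : ℕ) :
    ((univ : Finset (Fin d → Bool)).filter fun u => wt u = i).card = d.choose i := by
  have h : ((univ : Finset (Fin d → Bool)).filter fun u => wt u = i).card
      = (Finset.powersetCard i (univ : Finset (Fin d))).card := by
    apply Finset.card_bij' (fun u _ => supp u) (fun A _ => ind A)
    · intro u hu
      simp only [mem_filter, mem_univ, true_and] at hu
      simp only [Finset.mem_powersetCard]
      exact ⟨subset_univ _, hu⟩
    · intro A hA
      simp only [Finset.mem_powersetCard] at hA
      exact Finset.mem_filter.2 ⟨mem_univ _, by rw [wt, supp_ind]; exact hA.2⟩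
    · intro u _
      exact eq_of_supp_eq (supp_ind (supp u))
    · intro A _
      exact supp_ind A
  rw [h, Finset.card_powersetCard]
  simp

lemma card_above_le (a : Fin d → Bool) (j : ℕ) :
    ((univ : Finset (Fin d → Bool)).filter fun v => vle a v ∧ wt v = j).card
      ≤ (d - wt a).choose (j - wt a) := by
  have h : ((univ : Finset (Fin d → Bool)).filter fun v => vle a v ∧ wt v = j).card
      ≤ (Finset.powersetCard (j - wt a) (supp a)ᶜ).card := by
    apply Finset.card_le_card_of_injOn (fun v => supp v \ supp a)
    · intro v hv
      simp only [Finset.mem_coe, mem_filter, mem_univ, true_and] at hv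
      rw [Finset.mem_coe, Finset.mem_powersetCard]
      constructor
      · intro t ht
        simp only [mem_sdiff] at ht
        simpa using ht.2
      · rw [card_sdiff_of_subset (supp_subset hv.1)]
        have : #(supp v) = j := hv.2
        rw [this]; rfl
    · intro v1 h1 v2 h2 heq
      simp only [coe_filter, Set.mem_setOf_eq, mem_univ, true_and] at h1 h2
      apply eq_of_supp_eq
      have e1 : supp v1 = (supp v1 \ supp a) ∪ supp a := (sdiff_union_of_subset (supp_subset h1.1)).symm
      have e2 : supp v2 = (supp v2 \ supp a) ∪ supp a := (sdiff_union_of_subset (supp_subset h2.1)).symm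
      simp only at heq
      rw [e1, e2, heq]
  refine h.trans ?_
  rw [Finset.card_powersetCard, card_compl]
  simp [wt]

lemma card_below_le (b : Fin d → Bool) (i : ℕ) :
    ((univ : Finset (Fin d → Bool)).filter fun u => vle u b ∧ wt u = i).card
      ≤ (wt b).choose i := by
  have h : ((univ : Finset (Fin d → Bool)).filter fun u => vle u b ∧ wt u = i).card
      ≤ (Finset.powersetCard i (supp b)).card := by
    apply Finset.card_le_card_of_injOn (fun u => supp u)
    · intro u hu
      simp only [Finset.mem_coe, mem_filter, mem_univ, true_and] at hu
      rw [Finset.mem_coe, Finset.mem_powersetCard]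
      exact ⟨supp_subset hu.1, hu.2⟩
    · intro u1 _ u2 _ heq
      exact eq_of_supp_eq heq
  refine h.trans ?_
  rw [Finset.card_powersetCard]
  rfl

lemma card_above_ge (u : Fin d → Bool) (i j : ℕ) (hui : wt u = i) (hij : i ≤ j) :
    (d - i).choose (j - i)
      ≤ ((univ : Finset (Fin d → Bool)).filter fun v => vle u v ∧ wt v = j).card := by
  have h : (Finset.powersetCard (j - i) (supp u)ᶜ).card
      ≤ ((univ : Finset (Fin d → Bool)).filter fun v => vle u v ∧ wt v = j).card := by
    apply Finset.card_le_card_of_injOn (fun B => ind (supp u ∪ B))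
    · intro B hB
      rw [Finset.mem_coe, Finset.mem_powersetCard] at hB
      have hdisj : Disjoint (supp u) B := by
        rw [Finset.disjoint_left]
        intro t ht htB
        have := hB.1 htB
        simp at this
        exact this ht
      simp only [Finset.mem_coe, mem_filter, mem_univ, true_and]
      constructor
      · intro t ht
        have : t ∈ supp u ∪ B := mem_union_left _ (mem_supp.2 ht)
        simpa [ind] using this
      · have h3 : #(supp u) = i := hui
        rw [wt, supp_ind, card_union_of_disjoint hdisj, hB.2, h3]
        omega
    · intro B1 h1 B2 h2 heq
      rw [Finset.mem_coe, Finset.mem_powersetCard] at h1 h2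
      have hu1 : supp u ∪ B1 = supp u ∪ B2 := by
        have := congrArg supp heq
        rwa [supp_ind, supp_ind] at this
      have hd1 : Disjoint (supp u) B1 := by
        rw [Finset.disjoint_left]
        intro t ht htB
        have := h1.1 htB
        simp at this
        exact this ht
      have hd2 : Disjoint (supp u) B2 := by
        rw [Finset.disjoint_left]
        intro t ht htB
        have := h2.1 htB
        simp at this
        exact this ht
      calc B1 = (supp u ∪ B1) \ supp u := (union_sdiff_cancel_left hd1).symm
        _ = (supp u ∪ B2) \ supp u := by rw [hu1]
        _ = B2 := union_sdiff_cancel_left hd2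
  refine le_trans ?_ h
  rw [Finset.card_powersetCard, card_compl]
  have h2 : #(supp u) = i := hui
  simp [h2]


end Cube


open Finset Cube in
lemma main_count (d : ℕ) (hd : 1 ≤ d)
    (H : (Fin d → Bool) → (Fin d → Bool) → Prop)
    (hH : IsTCSpanner (cubeEdge d) H 2)
    (i j : ℕ) (hij : i < j) (hjd : j ≤ d) :
    ∃ k, i ≤ k ∧ k ≤ j ∧
      d.choose i * (d - i).choose (d - j)
        ≤ 4 * d * min (k.choose i) ((d - k).choose (d - j))
          * ({p : (Fin d → Bool) × (Fin d → Bool) | H p.1 p.2}).ncard := by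
  classical
  -- the edge set of H as a finset
  set E : Finset ((Fin d → Bool) × (Fin d → Bool)) :=
    (Set.toFinite {p : (Fin d → Bool) × (Fin d → Bool) | H p.1 p.2}).toFinset with hE
  have hEcard : ({p : (Fin d → Bool) × (Fin d → Bool) | H p.1 p.2}).ncard = E.card :=
    Set.ncard_eq_toFinset_card _ _
  have hmemE : ∀ p : (Fin d → Bool) × (Fin d → Bool), p ∈ E ↔ H p.1 p.2 := by
    intro p; rw [hE, Set.Finite.mem_toFinset]; rfl
  -- basic facts about edges of H
  have hHv : ∀ a b, H a b → vle a b := by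
    intro a b hab
    exact rtg_vle (hH.1 a b hab).2.to_reflTransGen
  have hHne : ∀ a b, H a b → a ≠ b := fun a b hab => (hH.1 a b hab).1
  -- the set of comparable pairs at levels i, j
  set Pairs : Finset ((Fin d → Bool) × (Fin d → Bool)) :=
    univ.filter (fun p => wt p.1 = i ∧ wt p.2 = j ∧ vle p.1 p.2) with hPairs
  have hmemPairs : ∀ p : (Fin d → Bool) × (Fin d → Bool),
      p ∈ Pairs ↔ wt p.1 = i ∧ wt p.2 = j ∧ vle p.1 p.2 := by
    intro p; rw [hPairs, mem_filter]; simp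
  -- the maximizing middle level k
  obtain ⟨k, hkmem, hkmax⟩ := Finset.exists_max_image (Finset.Icc i j)
    (fun k => min (k.choose i) ((d - k).choose (d - j))) ⟨i, by simp [hij.le]⟩
  obtain ⟨hik, hkj⟩ := Finset.mem_Icc.1 hkmem
  set M : ℕ := min (k.choose i) ((d - k).choose (d - j)) with hM
  have hM1 : 1 ≤ M := le_min (Nat.choose_pos hik) (Nat.choose_pos (Nat.sub_le_sub_left hkj d))
  -- lower bound on the number of pairs
  have hPl : d.choose i * (d - i).choose (j - i) ≤ Pairs.card := by
    have hmaps : ∀ p ∈ Pairs, p.1 ∈ univ.filter (fun u : Fin d → Bool => wt u = i) := by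
      intro p hp
      simp only [mem_filter, mem_univ, true_and]
      exact ((hmemPairs p).1 hp).1
    rw [Finset.card_eq_sum_card_fiberwise hmaps]
    have hterm : ∀ u ∈ univ.filter (fun u : Fin d → Bool => wt u = i),
        (d - i).choose (j - i) ≤ (Pairs.filter (fun p => p.1 = u)).card := by
      intro u hu
      simp only [mem_filter, mem_univ, true_and] at hu
      refine (card_above_ge u i j hu hij.le).trans ?_
      apply Finset.card_le_card_of_injOn (fun v => (u, v))
      · intro v hv
        simp only [Finset.mem_coe, mem_filter, mem_univ, true_and] at hv
        exact mem_filter.2 ⟨(hmemPairs (u, v)).2 ⟨hu, hv.2, hv.1⟩, rfl⟩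
      · intro v1 _ v2 _ h
        exact congrArg Prod.snd h
    calc d.choose i * (d - i).choose (j - i)
        = ∑ _u ∈ univ.filter (fun u : Fin d → Bool => wt u = i), (d - i).choose (j - i) := by
          rw [sum_const, smul_eq_mul, card_wt_eq]
      _ ≤ ∑ u ∈ univ.filter (fun u : Fin d → Bool => wt u = i),
            (Pairs.filter (fun p => p.1 = u)).card := sum_le_sum hterm
  -- every pair has a middle vertex
  have hex : ∀ p : (Fin d → Bool) × (Fin d → Bool), p ∈ Pairs →
      ∃ w, H p.1 w ∧ (w = p.2 ∨ H w p.2) := by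
    intro p hp
    obtain ⟨h1, h2, h3⟩ := (hmemPairs p).1 hp
    have hr : Relation.ReflTransGen (cubeEdge d) p.1 p.2 := vle_rtg h3
    have h4 : p.1 = p.2 ∨ ∃ w, H p.1 w ∧ (w = p.2 ∨ ∃ w', H w w' ∧ w' = p.2) := hH.2 _ _ hr
    rcases h4 with heq | ⟨w, hw1, hw2⟩
    · exfalso
      have : wt p.1 = wt p.2 := congrArg wt heq
      omega
    · rcases hw2 with heq | ⟨w', hw', heq'⟩
      · exact ⟨w, hw1, Or.inl heq⟩
      · exact ⟨w, hw1, Or.inr (heq' ▸ hw')⟩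
  -- the charging map
  set g : (Fin d → Bool) × (Fin d → Bool) → (Fin d → Bool) × (Fin d → Bool) :=
    fun p =>
      if h : ∃ w, H p.1 w ∧ (w = p.2 ∨ H w p.2) then
        if Classical.choose h = p.2 then p
        else if (d - wt (Classical.choose h)).choose (d - j) ≤ (wt (Classical.choose h)).choose i
          then (p.1, Classical.choose h) else (Classical.choose h, p.2)
      else p
    with hg
  have hgchar : ∀ p ∈ Pairs, ∃ w, H p.1 w ∧ (w = p.2 ∨ H w p.2) ∧
      ((w = p.2 ∧ g p = p)
        ∨ (w ≠ p.2 ∧ (d - wt w).choose (d - j) ≤ (wt w).choose i ∧ g p = (p.1, w))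
        ∨ (w ≠ p.2 ∧ ¬((d - wt w).choose (d - j) ≤ (wt w).choose i) ∧ g p = (w, p.2))) := by
    intro p hp
    have h := hex p hp
    refine ⟨Classical.choose h, (Classical.choose_spec h).1, (Classical.choose_spec h).2, ?_⟩
    rw [hg]
    simp only
    rw [dif_pos h]
    by_cases h1 : Classical.choose h = p.2
    · exact Or.inl ⟨h1, by rw [if_pos h1]⟩
    · by_cases h2 : (d - wt (Classical.choose h)).choose (d - j)
          ≤ (wt (Classical.choose h)).choose i
      · exact Or.inr (Or.inl ⟨h1, h2, by rw [if_neg h1, if_pos h2]⟩)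
      · exact Or.inr (Or.inr ⟨h1, h2, by rw [if_neg h1, if_neg h2]⟩)
  have hmaps : ∀ p ∈ Pairs, g p ∈ E := by
    intro p hp
    obtain ⟨w, hw, hor, hbr⟩ := hgchar p hp
    rcases hbr with ⟨he, hgp⟩ | ⟨hne, _, hgp⟩ | ⟨hne, _, hgp⟩
    · rw [hgp, hmemE]; exact he ▸ hw
    · rw [hgp, hmemE]; exact hw
    · rw [hgp, hmemE]
      rcases hor with heq | hH2
      · exact absurd heq hne
      · exact hH2
  -- fiber bound
  have hfiber : ∀ e ∈ E, (Pairs.filter (fun p => g p = e)).card ≤ 1 + 2 * M := by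
    intro e he
    set S : Finset ((Fin d → Bool) × (Fin d → Bool)) := Pairs.filter (fun p => g p = e) with hS
    have hSmem : ∀ p : (Fin d → Bool) × (Fin d → Bool), p ∈ S ↔ p ∈ Pairs ∧ g p = e := by
      intro p; rw [hS, mem_filter]
    -- branch analysis for "first-edge" pairs
    have hbr1 : ∀ p ∈ S.filter (fun p => p.1 = e.1 ∧ p.2 ≠ e.2),
        H p.1 e.2 ∧ H e.2 p.2 ∧ (d - wt e.2).choose (d - j) ≤ (wt e.2).choose i := by
      intro p hp
      rw [mem_filter] at hp
      obtain ⟨hpS, hp1, hp2⟩ := hp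
      obtain ⟨hpP, hge⟩ := (hSmem p).1 hpS
      obtain ⟨w, hw, hor, hbr⟩ := hgchar p hpP
      rcases hbr with ⟨hweq, hgp⟩ | ⟨hne, hcond, hgp⟩ | ⟨hne, hcond, hgp⟩
      · exact absurd (congrArg Prod.snd (hgp.symm.trans hge)) hp2
      · have he2 : w = e.2 := congrArg Prod.snd (hgp.symm.trans hge)
        subst he2
        rcases hor with heq | hH2
        · exact absurd heq hne
        · exact ⟨hw, hH2, hcond⟩
      · exact absurd (congrArg Prod.snd (hgp.symm.trans hge)) hp2
    -- branch analysis for "second-edge" pairs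
    have hbr2 : ∀ p ∈ S.filter (fun p => p.2 = e.2 ∧ p.1 ≠ e.1),
        H p.1 e.1 ∧ H e.1 p.2 ∧ ¬((d - wt e.1).choose (d - j) ≤ (wt e.1).choose i) := by
      intro p hp
      rw [mem_filter] at hp
      obtain ⟨hpS, hp1, hp2⟩ := hp
      obtain ⟨hpP, hge⟩ := (hSmem p).1 hpS
      obtain ⟨w, hw, hor, hbr⟩ := hgchar p hpP
      rcases hbr with ⟨hweq, hgp⟩ | ⟨hne, hcond, hgp⟩ | ⟨hne, hcond, hgp⟩
      · exact absurd (congrArg Prod.fst (hgp.symm.trans hge)) hp2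
      · exact absurd (congrArg Prod.fst (hgp.symm.trans hge)) hp2
      · have he1 : w = e.1 := congrArg Prod.fst (hgp.symm.trans hge)
        subst he1
        rcases hor with heq | hH2
        · exact absurd heq hne
        · exact ⟨hw, hH2, hcond⟩
    -- bound on first-edge pairs
    have hS1 : (S.filter (fun p => p.1 = e.1 ∧ p.2 ≠ e.2)).card ≤ M := by
      rcases (S.filter (fun p => p.1 = e.1 ∧ p.2 ≠ e.2)).eq_empty_or_nonempty with hemp | ⟨p0, hp0⟩
      · rw [hemp]; simp
      · obtain ⟨hw0, hw0', hcond0⟩ := hbr1 p0 hp0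
        rw [mem_filter] at hp0
        obtain ⟨hp0S, hp01, hp02⟩ := hp0
        obtain ⟨hp0P, -⟩ := (hSmem p0).1 hp0S
        obtain ⟨hwt1, hwt2, -⟩ := (hmemPairs p0).1 hp0P
        have hik2 : i ≤ wt e.2 := hwt1 ▸ wt_mono (hHv _ _ hw0)
        have hk2j : wt e.2 ≤ j := hwt2 ▸ wt_mono (hHv _ _ hw0')
        have hsub : S.filter (fun p => p.1 = e.1 ∧ p.2 ≠ e.2)
            ⊆ ((univ : Finset (Fin d → Bool)).filter
                (fun v => vle e.2 v ∧ wt v = j)).image (fun v => (e.1, v)) := by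
          intro p hp
          obtain ⟨-, hH2, -⟩ := hbr1 p hp
          rw [mem_filter] at hp
          obtain ⟨hpS, hp1, hp2⟩ := hp
          obtain ⟨hpP, -⟩ := (hSmem p).1 hpS
          obtain ⟨-, hwtp2, -⟩ := (hmemPairs p).1 hpP
          rw [mem_image]
          refine ⟨p.2, ?_, ?_⟩
          · simp only [mem_filter, mem_univ, true_and]
            exact ⟨hHv _ _ hH2, hwtp2⟩
          · exact Prod.ext hp1.symm rfl
        calc (S.filter (fun p => p.1 = e.1 ∧ p.2 ≠ e.2)).card
            ≤ (((univ : Finset (Fin d → Bool)).filter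
                (fun v => vle e.2 v ∧ wt v = j)).image (fun v => (e.1, v))).card :=
              card_le_card hsub
          _ ≤ ((univ : Finset (Fin d → Bool)).filter
                (fun v => vle e.2 v ∧ wt v = j)).card := card_image_le
          _ ≤ (d - wt e.2).choose (j - wt e.2) := card_above_le e.2 j
          _ = (d - wt e.2).choose (d - j) := by
              have h1 : j - wt e.2 ≤ d - wt e.2 := by omega
              have h2 : (d - wt e.2) - (j - wt e.2) = d - j := by omega
              rw [← Nat.choose_symm h1, h2]
          _ = min ((wt e.2).choose i) ((d - wt e.2).choose (d - j)) :=
              (min_eq_right hcond0).symm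
          _ ≤ M := hkmax (wt e.2) (Finset.mem_Icc.2 ⟨hik2, hk2j⟩)
    -- bound on second-edge pairs
    have hS2 : (S.filter (fun p => p.2 = e.2 ∧ p.1 ≠ e.1)).card ≤ M := by
      rcases (S.filter (fun p => p.2 = e.2 ∧ p.1 ≠ e.1)).eq_empty_or_nonempty with hemp | ⟨p0, hp0⟩
      · rw [hemp]; simp
      · obtain ⟨hw0, hw0', hcond0⟩ := hbr2 p0 hp0
        rw [mem_filter] at hp0
        obtain ⟨hp0S, hp01, hp02⟩ := hp0
        obtain ⟨hp0P, -⟩ := (hSmem p0).1 hp0S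
        obtain ⟨hwt1, hwt2, -⟩ := (hmemPairs p0).1 hp0P
        have hik1 : i ≤ wt e.1 := hwt1 ▸ wt_mono (hHv _ _ hw0)
        have hk1j : wt e.1 ≤ j := hwt2 ▸ wt_mono (hHv _ _ hw0')
        have hsub : S.filter (fun p => p.2 = e.2 ∧ p.1 ≠ e.1)
            ⊆ ((univ : Finset (Fin d → Bool)).filter
                (fun u => vle u e.1 ∧ wt u = i)).image (fun u => (u, e.2)) := by
          intro p hp
          obtain ⟨hH1, -, -⟩ := hbr2 p hp
          rw [mem_filter] at hp
          obtain ⟨hpS, hp1, hp2⟩ := hp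
          obtain ⟨hpP, -⟩ := (hSmem p).1 hpS
          obtain ⟨hwtp1, -, -⟩ := (hmemPairs p).1 hpP
          rw [mem_image]
          refine ⟨p.1, ?_, ?_⟩
          · simp only [mem_filter, mem_univ, true_and]
            exact ⟨hHv _ _ hH1, hwtp1⟩
          · exact Prod.ext rfl hp1.symm
        calc (S.filter (fun p => p.2 = e.2 ∧ p.1 ≠ e.1)).card
            ≤ (((univ : Finset (Fin d → Bool)).filter
                (fun u => vle u e.1 ∧ wt u = i)).image (fun u => (u, e.2))).card :=
              card_le_card hsub
          _ ≤ ((univ : Finset (Fin d → Bool)).filter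
                (fun u => vle u e.1 ∧ wt u = i)).card := card_image_le
          _ ≤ (wt e.1).choose i := card_below_le e.1 i
          _ = min ((wt e.1).choose i) ((d - wt e.1).choose (d - j)) :=
              (min_eq_left (le_of_not_ge hcond0)).symm
          _ ≤ M := hkmax (wt e.1) (Finset.mem_Icc.2 ⟨hik1, hk1j⟩)
    -- decomposition of the fiber
    have hsplit : S ⊆ insert e ((S.filter (fun p => p.1 = e.1 ∧ p.2 ≠ e.2))
        ∪ (S.filter (fun p => p.2 = e.2 ∧ p.1 ≠ e.1))) := by
      intro p hp
      obtain ⟨hpP, hge⟩ := (hSmem p).1 hp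
      obtain ⟨w, hw, hor, hbr⟩ := hgchar p hpP
      rcases hbr with ⟨hweq, hgp⟩ | ⟨hne, hcond, hgp⟩ | ⟨hne, hcond, hgp⟩
      · exact mem_insert.2 (Or.inl (hgp.symm.trans hge))
      · have hpe : e = (p.1, w) := (hgp.symm.trans hge).symm
        subst hpe
        refine mem_insert.2 (Or.inr (mem_union_left _ (mem_filter.2 ⟨hp, rfl, ?_⟩)))
        exact fun hc => hne hc.symm
      · have hpe : e = (w, p.2) := (hgp.symm.trans hge).symm
        subst hpe
        refine mem_insert.2 (Or.inr (mem_union_right _ (mem_filter.2 ⟨hp, rfl, ?_⟩)))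
        exact fun hc => hHne _ _ hw hc
    calc S.card ≤ (insert e ((S.filter (fun p => p.1 = e.1 ∧ p.2 ≠ e.2))
        ∪ (S.filter (fun p => p.2 = e.2 ∧ p.1 ≠ e.1)))).card := card_le_card hsplit
      _ ≤ ((S.filter (fun p => p.1 = e.1 ∧ p.2 ≠ e.2))
        ∪ (S.filter (fun p => p.2 = e.2 ∧ p.1 ≠ e.1))).card + 1 := card_insert_le _ _
      _ ≤ ((S.filter (fun p => p.1 = e.1 ∧ p.2 ≠ e.2)).card
          + (S.filter (fun p => p.2 = e.2 ∧ p.1 ≠ e.1)).card) + 1 := by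
            exact Nat.add_le_add_right (card_union_le _ _) 1
      _ ≤ 1 + 2 * M := by omega
  -- put everything together
  have hPu : Pairs.card ≤ E.card * (1 + 2 * M) := by
    rw [Finset.card_eq_sum_card_fiberwise hmaps]
    calc ∑ e ∈ E, (Pairs.filter (fun p => g p = e)).card
        ≤ ∑ _e ∈ E, (1 + 2 * M) := sum_le_sum hfiber
      _ = E.card * (1 + 2 * M) := by rw [sum_const, smul_eq_mul]
  refine ⟨k, hik, hkj, ?_⟩
  rw [hEcard]
  have hsym : (d - i).choose (d - j) = (d - i).choose (j - i) := by
    have h1 : j - i ≤ d - i := by omega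
    have h2 : (d - i) - (j - i) = d - j := by omega
    rw [← Nat.choose_symm h1, h2]
  have hfin : 1 + 2 * M ≤ 4 * d * M := by nlinarith
  calc d.choose i * (d - i).choose (d - j)
      = d.choose i * (d - i).choose (j - i) := by rw [hsym]
    _ ≤ Pairs.card := hPl
    _ ≤ E.card * (1 + 2 * M) := hPu
    _ ≤ E.card * (4 * d * M) := Nat.mul_le_mul_left _ hfin
    _ = 4 * d * M * E.card := by ring

/-- Every 2-TC-spanner of the hypercube `[2]^d` has at least
`(1/(4d))·max_{0 ≤ i < j ≤ d} min_{i ≤ k ≤ j} [C(d,i)·C(d-i,d-j)] / min{C(k,i), C(d-k,d-j)}`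
edges. -/
theorem stmt16 (d : ℕ) (hd : 1 ≤ d)
    (H : (Fin d → Bool) → (Fin d → Bool) → Prop)
    (hH : IsTCSpanner (cubeEdge d) H 2) :
    (1 / (4 * (d : ℝ))) *
      sSup {x : ℝ | ∃ i j : ℕ, i < j ∧ j ≤ d ∧
        x = sInf ((fun k : ℕ =>
          ((d.choose i : ℝ) * ((d - i).choose (d - j) : ℝ)) /
            min ((k.choose i : ℝ)) (((d - k).choose (d - j) : ℝ))) '' Set.Icc i j)} ≤
      (({p : (Fin d → Bool) × (Fin d → Bool) | H p.1 p.2}).ncard : ℝ) := by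
  have hd' : (0:ℝ) < (d : ℝ) := by exact_mod_cast Nat.lt_of_lt_of_le Nat.zero_lt_one hd
  set N : ℝ := (({p : (Fin d → Bool) × (Fin d → Bool) | H p.1 p.2}).ncard : ℝ) with hN
  have hN0 : (0:ℝ) ≤ N := Nat.cast_nonneg _
  have hbound : sSup {x : ℝ | ∃ i j : ℕ, i < j ∧ j ≤ d ∧
      x = sInf ((fun k : ℕ =>
        ((d.choose i : ℝ) * ((d - i).choose (d - j) : ℝ)) /
          min ((k.choose i : ℝ)) (((d - k).choose (d - j) : ℝ))) '' Set.Icc i j)}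
      ≤ 4 * (d : ℝ) * N := by
    apply Real.sSup_le
    · rintro x ⟨i, j, hij, hjd, rfl⟩
      obtain ⟨k, hik, hkj, hkey⟩ := main_count d hd H hH i j hij hjd
      have hMpos : (0:ℝ) < min ((k.choose i : ℝ)) (((d - k).choose (d - j) : ℝ)) := by
        apply lt_min
        · exact_mod_cast Nat.choose_pos hik
        · exact_mod_cast Nat.choose_pos (Nat.sub_le_sub_left hkj d)
      apply csInf_le_of_le (b := ((d.choose i : ℝ) * ((d - i).choose (d - j) : ℝ)) /
          min ((k.choose i : ℝ)) (((d - k).choose (d - j) : ℝ)))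
      · refine ⟨0, ?_⟩
        rintro y ⟨k', _, rfl⟩
        have h1 : (0:ℝ) ≤ min ((k'.choose i : ℝ)) (((d - k').choose (d - j) : ℝ)) :=
          le_min (Nat.cast_nonneg _) (Nat.cast_nonneg _)
        positivity
      · exact ⟨k, Set.mem_Icc.2 ⟨hik, hkj⟩, rfl⟩
      · rw [div_le_iff₀ hMpos]
        have h := (Nat.cast_le (α := ℝ)).2 hkey
        push_cast [Nat.cast_min] at h
        rw [hN]
        nlinarith [h]
    · positivity
  calc (1 / (4 * (d : ℝ))) *
      sSup {x : ℝ | ∃ i j : ℕ, i < j ∧ j ≤ d ∧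
        x = sInf ((fun k : ℕ =>
          ((d.choose i : ℝ) * ((d - i).choose (d - j) : ℝ)) /
            min ((k.choose i : ℝ)) (((d - k).choose (d - j) : ℝ))) '' Set.Icc i j)}
      ≤ (1 / (4 * (d : ℝ))) * (4 * (d : ℝ) * N) := by
        apply mul_le_mul_of_nonneg_left hbound
        positivity
    _ = N := by field_simp
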